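/- Let L > 0 and let f : E → ℝ be convex with nonempty minimizer set X* and minimum value f*, and suppose f is L-QG+. Let x_0 ∈ E and define iterates of the heavy-ball method: for k ≥ 1, pick g_{k−1} ∈ ∂f(x_{k−1}) and set x_k = (k/(k+1))·x_{k−1} + (1/(k+1))·x_0 − (1/(k+1))·∑_{i=0}^{k−1} (1/L)·g_i, where additionally g_k ∈ ∂f(x_k) for every k. Then for every n ∈ ℕ, f(x_n) − f* ≤ (L/(2(n+1)))·d(x_0, X*)². -/

import Mathlib

open scoped RealInnerProductSpace

theorem heavy_ball_worst_case_guarantee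
    {E : Type*} [NormedAddCommGroup E] [InnerProductSpace ℝ E] [FiniteDimensional ℝ E]
    (L : ℝ) (hL : 0 < L) (f : E → ℝ) (hconv : ConvexOn ℝ Set.univ f)
    (Xstar : Set E) (hXstar : Xstar = {z | ∀ y, f z ≤ f y}) (hne : Xstar.Nonempty)
    (fstar : ℝ) (hfstar : ∀ z ∈ Xstar, f z = fstar)
    (hQG : ∀ z, f z - fstar ≤ L / 2 * Metric.infDist z Xstar ^ 2)
    (x g : ℕ → E)
    (hsub : ∀ k, ∀ y, f y ≥ f (x k) + ⟪g k, y - x k⟫)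
    (hupd : ∀ k, 1 ≤ k →
      x k = ((k : ℝ) / ((k : ℝ) + 1)) • x (k - 1) + ((1 : ℝ) / ((k : ℝ) + 1)) • x 0
        - ((1 : ℝ) / ((k : ℝ) + 1)) • ∑ i ∈ Finset.range k, (1 / L) • g i) :
    ∀ n : ℕ, f (x n) - fstar ≤ L / (2 * ((n : ℝ) + 1)) * Metric.infDist (x 0) Xstar ^ 2 := by
  intro n
  have hLne : L ≠ 0 := ne_of_gt hL
  set Y : ℕ → E := fun k => x 0 - ∑ i ∈ Finset.range k, (1 / L) • g i with hY
  have hYsucc : ∀ k, Y (k + 1) = Y k - (1 / L) • g k := by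
    intro k
    simp only [hY, Finset.sum_range_succ]
    abel
  have hid : ∀ p : ℕ, ((p : ℝ) + 2) • x (p + 1) = ((p : ℝ) + 1) • x p + Y (p + 1) := by
    intro p
    have h := hupd (p + 1) (by omega)
    simp only [Nat.add_sub_cancel] at h
    push_cast at h
    rw [h, hY]
    have hp : ((p : ℝ) + 1 + 1) ≠ 0 := by positivity
    match_scalars <;> field_simp <;> ring
  -- expansion lemma
  have hexpand : ∀ v w : E, L / 2 * ‖v - (1 / L) • w‖ ^ 2
      = L / 2 * ‖v‖ ^ 2 - ⟪w, v⟫ + ‖w‖ ^ 2 / (2 * L) := by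
    intro v w
    rw [norm_sub_sq_real, real_inner_smul_right, norm_smul, real_inner_comm v w,
      Real.norm_of_nonneg (by positivity : (0:ℝ) ≤ 1 / L)]
    field_simp
  -- main bound for each minimizer z
  have key : ∀ z ∈ Xstar, ((n : ℝ) + 1) * (f (x n) - fstar) ≤ L / 2 * ‖x 0 - z‖ ^ 2 := by
    intro z hz
    have star : ∀ k, f (x k) - fstar + ‖g k‖ ^ 2 / (2 * L) ≤ ⟪g k, x k - z⟫ := by
      intro k
      have h1 := hsub k (z + (1 / L) • g k)
      have h2 := hQG (z + (1 / L) • g k)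
      have hdist : Metric.infDist (z + (1 / L) • g k) Xstar ≤ (1 / L) * ‖g k‖ := by
        have h := Metric.infDist_le_dist_of_mem hz (x := z + (1 / L) • g k)
        rw [dist_eq_norm, add_sub_cancel_left, norm_smul,
          Real.norm_of_nonneg (by positivity : (0:ℝ) ≤ 1 / L)] at h
        exact h
      have hd2 : Metric.infDist (z + (1 / L) • g k) Xstar ^ 2 ≤ ((1 / L) * ‖g k‖) ^ 2 :=
        pow_le_pow_left₀ Metric.infDist_nonneg hdist 2
      have h2' : f (z + (1 / L) • g k) - fstar ≤ L / 2 * ((1 / L) * ‖g k‖) ^ 2 :=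
        le_trans h2 (by nlinarith)
      have hinner : ⟪g k, z + (1 / L) • g k - x k⟫
          = -⟪g k, x k - z⟫ + (1 / L) * ‖g k‖ ^ 2 := by
        have hv : z + (1 / L) • g k - x k = -(x k - z) + (1 / L) • g k := by abel
        rw [hv, inner_add_right, inner_neg_right, real_inner_smul_right,
          real_inner_self_eq_norm_sq]
      rw [hinner] at h1
      have hc1 : L / 2 * ((1 / L) * ‖g k‖) ^ 2 = ‖g k‖ ^ 2 / (2 * L) := by
        field_simp
      have hc2 : (1 / L) * ‖g k‖ ^ 2 - ‖g k‖ ^ 2 / (2 * L) = ‖g k‖ ^ 2 / (2 * L) := by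
        field_simp; ring
      linarith
    have main : ∀ m : ℕ, ((m : ℝ) + 1) * (f (x m) - fstar) + L / 2 * ‖Y (m + 1) - z‖ ^ 2
        ≤ L / 2 * ‖x 0 - z‖ ^ 2 := by
      intro m
      induction m with
      | zero =>
        have hY1 : Y 1 - z = (x 0 - z) - (1 / L) • g 0 := by
          simp only [hY, Finset.sum_range_one]
          abel
        rw [hY1]
        have he := hexpand (x 0 - z) (g 0)
        have hs := star 0
        push_cast
        linarith
      | succ p ih =>
        have hs := star (p + 1)
        have h3 := hsub (p + 1) (x p)
        -- vector identity: (p+1) • (x p - x (p+1)) = x (p+1) - Y (p+1)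
        have hvec : ((p : ℝ) + 1) • (x p - x (p + 1)) = x (p + 1) - Y (p + 1) := by
          have h := hid p
          rw [smul_sub]
          have : ((p:ℝ) + 1) • x p = ((p:ℝ) + 2) • x (p+1) - Y (p+1) := by
            rw [h]; abel
          rw [this]
          match_scalars <;> ring
        have h5 : ((p : ℝ) + 1) * ⟪g (p + 1), x p - x (p + 1)⟫
            = ⟪g (p + 1), x (p + 1) - z⟫ - ⟪g (p + 1), Y (p + 1) - z⟫ := by
          rw [← real_inner_smul_right, hvec, ← inner_sub_right]
          congr 1
          abel
        have hYe : Y (p + 1 + 1) - z = (Y (p + 1) - z) - (1 / L) • g (p + 1) := by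
          rw [hYsucc (p + 1)]; abel
        rw [hYe]
        have he := hexpand (Y (p + 1) - z) (g (p + 1))
        have hmul : ((p : ℝ) + 1) * (f (x p) - fstar)
            ≥ ((p : ℝ) + 1) * (f (x (p + 1)) - fstar)
              + ((p : ℝ) + 1) * ⟪g (p + 1), x p - x (p + 1)⟫ := by
          have hp : (0:ℝ) ≤ (p : ℝ) + 1 := by positivity
          nlinarith [h3]
        push_cast
        linarith
    have hN : 0 ≤ L / 2 * ‖Y (n + 1) - z‖ ^ 2 := by positivity
    linarith [main n]
  -- conclude via infDist
  obtain ⟨z0, hz0⟩ := hne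
  have hz0min : ∀ y, f z0 ≤ f y := by rw [hXstar] at hz0; exact hz0
  have hfz0 : f z0 = fstar := hfstar z0 hz0
  have hen : 0 ≤ f (x n) - fstar := by
    have := hz0min (x n); linarith [hfz0 ▸ this]
  set c : ℝ := L / (2 * ((n : ℝ) + 1)) with hc
  have hcpos : 0 < c := by positivity
  have hsqrt : Real.sqrt ((f (x n) - fstar) / c) ≤ Metric.infDist (x 0) Xstar := by
    refine le_of_not_gt fun hlt => ?_
    obtain ⟨y, hy, hd⟩ := (Metric.infDist_lt_iff ⟨z0, hz0⟩).1 hlt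
    refine absurd hd (not_lt.2 ?_)
    have hk := key y hy
    have hnp : (0:ℝ) < (n:ℝ) + 1 := by positivity
    have hstep : f (x n) - fstar ≤ L / 2 * ‖x 0 - y‖ ^ 2 / ((n:ℝ) + 1) := by
      rw [le_div_iff₀ hnp]; linarith
    have heq : L / 2 * ‖x 0 - y‖ ^ 2 / ((n:ℝ) + 1)
        = ‖x 0 - y‖ ^ 2 * (L / (2 * ((n:ℝ) + 1))) := by
      field_simp
    have h1 : (f (x n) - fstar) / c ≤ dist (x 0) y ^ 2 := by
      rw [dist_eq_norm, div_le_iff₀ hcpos, hc]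
      linarith
    calc Real.sqrt ((f (x n) - fstar) / c) ≤ Real.sqrt (dist (x 0) y ^ 2) :=
          Real.sqrt_le_sqrt h1
      _ = dist (x 0) y := by rw [Real.sqrt_sq dist_nonneg]
  have hnn : 0 ≤ (f (x n) - fstar) / c := div_nonneg hen (le_of_lt hcpos)
  have h2 : (f (x n) - fstar) / c ≤ Metric.infDist (x 0) Xstar ^ 2 := by
    have := pow_le_pow_left₀ (Real.sqrt_nonneg _) hsqrt 2
    rwa [Real.sq_sqrt hnn] at this
  rw [div_le_iff₀ hcpos] at h2
  calc f (x n) - fstar ≤ Metric.infDist (x 0) Xstar ^ 2 * c := h2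
    _ = c * Metric.infDist (x 0) Xstar ^ 2 := by ring
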